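/- Let ℓ ≥ 2 be an integer and set m = 2ℓ − 1. Consider the vertex set V consisting of the elements of ℤ/mℤ together with one additional vertex ∞ (so |V| = 2ℓ). For each i ∈ ℤ/mℤ, define the edge set c_i to consist of the edge {∞, i} together with the edges {i − j, i + j} for j = 1, …, ℓ − 1, where the arithmetic is modulo m. Then for every i ∈ ℤ/mℤ, the simple graph on V with edge set c_i ∪ c_{i+1} contains a Hamiltonian cycle. -/

import Mathlib

open SimpleGraph List

section helpers
variable {V : Type*} {G : SimpleGraph V}

lemma exists_walk_of_chain : ∀ (l : List V) (a b : V),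
    List.Chain G.Adj a (l ++ [b]) →
    ∃ w : G.Walk a b, w.support = a :: (l ++ [b]) ∧
      w.edges = List.zipWith (fun x y => s(x,y)) (a :: (l ++ [b])) (l ++ [b])
  | [], a, b, h => by
      obtain ⟨hab, _⟩ := List.isChain_cons_cons.1 h
      exact ⟨Walk.cons hab Walk.nil, by simp, by simp⟩
  | x :: l, a, b, h => by
      obtain ⟨hax, h'⟩ := List.isChain_cons_cons.1 h
      obtain ⟨w, hs, he⟩ := exists_walk_of_chain l x b h'
      exact ⟨Walk.cons hax w, by simp [hs], by simp [he, hs]⟩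

lemma chain_map_range' (g : ℕ → V) :
    ∀ (n s : ℕ), (∀ k, s ≤ k → k < s + n → G.Adj (g k) (g (k+1))) →
    List.Chain G.Adj (g s) (List.map g (List.range' (s+1) n))
  | 0, s, _ => by exact List.Chain.nil
  | n+1, s, h => by
      rw [List.range'_succ, List.map_cons]
      exact List.Chain.cons (h s le_rfl (by omega))
        (chain_map_range' g n (s+1) (fun k hk hk' => h k (by omega) (by omega)))

lemma mem_zipWith_map_range' (g : ℕ → V) :
    ∀ (n s : ℕ) (e : Sym2 V),
      e ∈ List.zipWith (fun x y => s(x,y)) (List.map g (List.range' s (n+1)))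
        (List.map g (List.range' (s+1) n)) →
      ∃ k, s ≤ k ∧ k < s + n ∧ e = s(g k, g (k+1))
  | 0, s, e => by simp [List.range'_succ]
  | n+1, s, e => by
      rw [List.range'_succ (s := s), List.range'_succ (s := s+1), List.map_cons, List.map_cons,
        List.zipWith_cons_cons]
      intro h
      rcases List.mem_cons.1 h with h | h
      · exact ⟨s, le_rfl, by omega, h⟩
      · obtain ⟨k, hk1, hk2, hk3⟩ := mem_zipWith_map_range' g n (s+1) e (by
          rw [List.range'_succ (s := s+1), List.map_cons]; exact h)
        exact ⟨k, by omega, by omega, hk3⟩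

end helpers

theorem hamiltonianCycle_of_union_of_consecutive_colour_classes
    (ℓ : ℕ) (hℓ : 2 ≤ ℓ) (m : ℕ) (hm : m = 2 * ℓ - 1)
    (c : ZMod m → Set (Sym2 (Option (ZMod m))))
    (hc : ∀ i : ZMod m, c i =
      insert s((none : Option (ZMod m)), (some i : Option (ZMod m)))
        {e : Sym2 (Option (ZMod m)) | ∃ j : ℕ, 1 ≤ j ∧ j ≤ ℓ - 1 ∧
          e = s((some (i - (j : ZMod m)) : Option (ZMod m)),
                (some (i + (j : ZMod m)) : Option (ZMod m)))})
    (i : ZMod m) :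
    ∃ a, ∃ p : (SimpleGraph.fromEdgeSet (c i ∪ c (i + 1))).Walk a a,
      p.IsHamiltonianCycle := by
  have hm3 : 3 ≤ m := by omega
  haveI : NeZero m := ⟨by omega⟩
  have hmodd : m % 2 = 1 := by omega
  set G := SimpleGraph.fromEdgeSet (c i ∪ c (i + 1)) with hG
  set f : ℕ → ZMod m := fun n => if n % 2 = 0 then i - (n : ZMod m) else i + ((n : ZMod m) + 1)
    with hf
  set g : ℕ → Option (ZMod m) := fun n => if n < m then some (f n) else none with hgdef
  have hcast : ∀ k < m, ∀ k' < m, (k : ZMod m) = (k' : ZMod m) → k = k' := by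
    intro k hk k' hk' h
    have := congrArg ZMod.val h
    rwa [ZMod.val_cast_of_lt hk, ZMod.val_cast_of_lt hk'] at this
  have hdvd : ∀ k < m, ∀ k' < m, k % 2 = 0 → k' % 2 = 1 →
      ((k + k' + 1 : ℕ) : ZMod m) ≠ 0 := by
    intro k hk k' hk' hke hko h
    obtain ⟨t, ht⟩ := (ZMod.natCast_eq_zero_iff _ _).1 h
    rcases Nat.lt_or_ge t 2 with h' | h'
    · interval_cases t <;> omega
    · have h2 : m * 2 ≤ k + k' + 1 := ht ▸ Nat.mul_le_mul_left m h'
      omega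
  have hinj : ∀ k < m, ∀ k' < m, f k = f k' → k = k' := by
    intro k hk k' hk' h
    simp only [hf] at h
    split_ifs at h with h1 h2 h2
    · exact hcast k hk k' hk' (by linear_combination -h)
    · exact absurd (by push_cast; linear_combination -h) (hdvd k hk k' hk' h1 (by omega))
    · exact absurd (by push_cast; linear_combination h) (hdvd k' hk' k hk h2 (by omega))
    · exact hcast k hk k' hk' (by linear_combination h)
  have hsurj : ∀ x : ZMod m, ∃ k, k < m ∧ f k = x := by
    intro x
    have hum : (i - x).val < m := ZMod.val_lt _
    have huc : (((i - x).val : ℕ) : ZMod m) = i - x := ZMod.natCast_zmod_val _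
    set u := (i - x).val with hu
    rcases Nat.mod_two_eq_zero_or_one u with hue | hue
    · refine ⟨u, hum, ?_⟩
      simp only [hf]
      rw [if_pos hue, huc]; ring
    · refine ⟨m - u - 1, by omega, ?_⟩
      simp only [hf]
      rw [if_neg (by omega)]
      have hn : ((m - u - 1 : ℕ) : ZMod m) = -(u : ZMod m) - 1 := by
        rw [show m - u - 1 = m - (u+1) by omega, Nat.cast_sub (by omega)]
        push_cast
        rw [ZMod.natCast_self]; ring
      rw [hn, huc]; ring
  have hgnodup : (List.map g (List.range (m+1))).Nodup := by
    refine List.Nodup.map_on ?_ List.nodup_range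
    intro x hx y hy hxy
    simp only [List.mem_range] at hx hy
    simp only [hgdef] at hxy
    split_ifs at hxy with h1 h2 h2
    · exact hinj x h1 y h2 (Option.some_injective _ hxy)
    · omega
  have memc : ∀ (z : ZMod m) (j : ℕ), 1 ≤ j → j ≤ ℓ - 1 →
      s(some (z - (j : ZMod m)), some (z + (j : ZMod m))) ∈ c z := by
    intro z j h1 h2
    rw [hc z]
    exact Set.mem_insert_iff.2 (Or.inr ⟨j, h1, h2, rfl⟩)
  have memc' : ∀ (z : ZMod m) (n : ℕ), 1 ≤ n → n ≤ m - 1 →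
      s(some (z - (n : ZMod m)), some (z + (n : ZMod m))) ∈ c z := by
    intro z n h1 h2
    rcases le_or_gt n (ℓ - 1) with h | h
    · exact memc z n h1 h
    · have e1 : ((m - n : ℕ) : ZMod m) = -(n : ZMod m) := by
        rw [Nat.cast_sub (by omega), ZMod.natCast_self]; ring
      have hmm := memc z (m - n) (by omega) (by omega)
      rw [e1, show z - -(n : ZMod m) = z + n by ring, show z + -(n : ZMod m) = z - n by ring,
        Sym2.eq_swap] at hmm
      exact hmm
  have hadj : ∀ k, k + 1 < m → G.Adj (some (f k)) (some (f (k+1))) := by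
    intro k hk
    rw [hG, fromEdgeSet_adj]
    refine ⟨?_, fun h => by
      have := hinj k (by omega) (k+1) (by omega) (Option.some_injective _ h); omega⟩
    rcases Nat.mod_two_eq_zero_or_one k with hke | hke
    · have h1 : f k = (i+1) - ((k+1 : ℕ) : ZMod m) := by
        simp only [hf]; rw [if_pos hke]; push_cast; ring
      have h2 : f (k+1) = (i+1) + ((k+1 : ℕ) : ZMod m) := by
        simp only [hf]; rw [if_neg (by omega)]; push_cast; ring
      rw [h1, h2]
      exact Set.mem_union_right _ (memc' (i+1) (k+1) (by omega) (by omega))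
    · have h1 : f k = i + ((k+1 : ℕ) : ZMod m) := by
        simp only [hf]; rw [if_neg (by omega)]; push_cast; ring
      have h2 : f (k+1) = i - ((k+1 : ℕ) : ZMod m) := by
        simp only [hf]; rw [if_pos (by omega)]
      rw [h1, h2, Sym2.eq_swap]
      exact Set.mem_union_left _ (memc' i (k+1) (by omega) (by omega))
  have hf0 : f 0 = i := by simp [hf]
  have hadj0 : G.Adj none (some (f 0)) := by
    rw [hG, fromEdgeSet_adj, hf0]
    exact ⟨Set.mem_union_left _ (by rw [hc i]; exact Set.mem_insert _ _), by simp⟩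
  have hflast : f (m-1) = i + 1 := by
    simp only [hf]
    rw [if_pos (by omega), Nat.cast_sub (by omega), ZMod.natCast_self]
    push_cast; ring
  have hadjlast : G.Adj (some (f (m-1))) none := by
    rw [hG, fromEdgeSet_adj, hflast]
    refine ⟨Set.mem_union_right _ ?_, by simp⟩
    rw [hc (i+1)]
    exact Set.mem_insert_iff.2 (Or.inl Sym2.eq_swap)
  have hg : ∀ k, k < m → g k = some (f k) := fun k hk => if_pos hk
  have hgm : g m = none := if_neg (lt_irrefl m)
  have hstep : ∀ k, 0 ≤ k → k < 0 + m → G.Adj (g k) (g (k+1)) := by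
    intro k _ hk
    rcases Nat.lt_or_ge (k+1) m with h | h
    · rw [hg k (by omega), hg (k+1) h]; exact hadj k h
    · rw [hg k (by omega), show k + 1 = m by omega, hgm, show k = m - 1 by omega]
      exact hadjlast
  have hchain : List.Chain G.Adj (g 0) (List.map g (List.range' 1 m)) :=
    chain_map_range' g m 0 hstep
  have hsplit : List.map g (List.range' 1 (m-1)) ++ [(none : Option (ZMod m))]
      = List.map g (List.range' 1 m) := by
    have h1 : List.range' 1 m = List.range' 1 (m-1) ++ [m] := by
      have h2 := List.range'_concat (step := 1) (s := 1) (n := m-1)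
      rw [show m - 1 + 1 = m by omega, show 1 + 1 * (m-1) = m by omega] at h2
      exact h2
    rw [h1, List.map_append]
    simp [hgm]
  have hchain' : List.Chain G.Adj (some (f 0))
      (List.map g (List.range' 1 (m-1)) ++ [(none : Option (ZMod m))]) := by
    rw [hsplit]
    rw [hg 0 (by omega)] at hchain
    exact hchain
  obtain ⟨p, hps, hpe⟩ := exists_walk_of_chain _ _ _ hchain'
  have hrange : List.map g (List.range (m+1))
      = some (f 0) :: List.map g (List.range' 1 m) := by
    rw [List.range_eq_range', List.range'_succ, List.map_cons, hg 0 (by omega)]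
  have hsupp : p.support = List.map g (List.range (m+1)) := by
    rw [hps, hsplit, hrange]
  have hpath : p.IsPath := Walk.IsPath.mk' (hsupp ▸ hgnodup)
  have hne : s((none : Option (ZMod m)), some (f 0)) ∉ p.edges := by
    intro h
    rw [hpe, hsplit] at h
    have h' : s((none : Option (ZMod m)), some (f 0)) ∈ List.zipWith (fun x y => s(x,y))
        (List.map g (List.range' 0 (m+1))) (List.map g (List.range' 1 m)) := by
      rw [List.range'_succ, List.map_cons, hg 0 (by omega)]
      simpa using h
    obtain ⟨k, _, hk2, hk3⟩ := mem_zipWith_map_range' g m 0 _ h'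
    rw [hg k (by omega)] at hk3
    rcases Nat.lt_or_ge (k+1) m with hlt | hge
    · rw [hg (k+1) hlt] at hk3
      simp [Sym2.eq_iff] at hk3
    · rw [show k + 1 = m by omega, hgm] at hk3
      rw [Sym2.eq_iff] at hk3
      rcases hk3 with ⟨h1, _⟩ | ⟨_, h2⟩
      · exact absurd h1 (by simp)
      · have := hinj 0 (by omega) k (by omega) (Option.some_injective _ h2)
        omega
  refine ⟨none, Walk.cons hadj0 p, ?_⟩
  rw [Walk.isHamiltonianCycle_iff_isCycle_and_support_count_tail_eq_one]
  refine ⟨(Walk.cons_isCycle_iff p hadj0).2 ⟨hpath, hne⟩, fun a => ?_⟩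
  have htail : (Walk.cons hadj0 p).support.tail = List.map g (List.range (m+1)) := by
    rw [Walk.support_cons, List.tail_cons, hsupp]
  rw [htail]
  have hmem : a ∈ List.map g (List.range (m+1)) := by
    rcases a with _ | x
    · exact List.mem_map.2 ⟨m, List.mem_range.2 (by omega), hgm⟩
    · obtain ⟨k, hk, hfk⟩ := hsurj x
      exact List.mem_map.2 ⟨k, List.mem_range.2 (by omega), by rw [hg k hk, hfk]⟩
  exact @List.count_eq_one_of_mem _ instBEqOfDecidableEq _ _ _ hgnodup hmem
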